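/- Let a and b be coprime odd integers with a + b ≠ 0. Then a positive integer c is 2^1-good (i.e., 2c divides a^k + b^k for some positive integer k) if and only if either c = 2d for some positive integer d that is 2^2-good (i.e., 4d divides a^k + b^k for some positive integer k), or c is odd and either c = 1 or there exists an integer s ≥ 1 such that for every prime p dividing c, 2^s exactly divides the multiplicative order of a·b^{-1} modulo p (2^s divides it and 2^{s+1} does not). -/

import Mathlib

open Finset

lemma aux_pow_eq_one_iff (a b : ℤ) (p : ℕ) [Fact p.Prime]
    (hpb : ¬ (p:ℤ) ∣ b) (n : ℕ) :
    ((a : ZMod p) * (b : ZMod p)⁻¹) ^ n = 1 ↔ (p:ℤ) ∣ a ^ n - b ^ n := by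
  have hb0 : ((b : ℤ) : ZMod p) ≠ 0 := by
    simpa [ZMod.intCast_zmod_eq_zero_iff_dvd] using hpb
  have hbn : ((b : ZMod p)) ^ n ≠ 0 := pow_ne_zero _ hb0
  rw [mul_pow, inv_pow, mul_inv_eq_one₀ hbn,
    show ((a:ℤ):ZMod p)^n = ((a^n:ℤ):ZMod p) by push_cast; ring,
    show ((b:ℤ):ZMod p)^n = ((b^n:ℤ):ZMod p) by push_cast; ring,
    ZMod.intCast_eq_intCast_iff, Int.modEq_iff_dvd, dvd_sub_comm]

lemma aux_pow_eq_negone_iff (a b : ℤ) (p : ℕ) [Fact p.Prime]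
    (hpb : ¬ (p:ℤ) ∣ b) (n : ℕ) :
    ((a : ZMod p) * (b : ZMod p)⁻¹) ^ n = -1 ↔ (p:ℤ) ∣ a ^ n + b ^ n := by
  have hb0 : ((b : ℤ) : ZMod p) ≠ 0 := by
    simpa [ZMod.intCast_zmod_eq_zero_iff_dvd] using hpb
  have hbn : ((b : ZMod p)) ^ n ≠ 0 := pow_ne_zero _ hb0
  rw [mul_pow, inv_pow, mul_inv_eq_iff_eq_mul₀ hbn, neg_one_mul,
    show ((a:ℤ):ZMod p)^n = ((a^n:ℤ):ZMod p) by push_cast; ring,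
    show -((b:ℤ):ZMod p)^n = ((-b^n:ℤ):ZMod p) by push_cast; ring,
    ZMod.intCast_eq_intCast_iff, Int.modEq_iff_dvd]
  constructor <;> intro h <;> [skip; skip] <;>
    · obtain ⟨u, hu⟩ := h; exact ⟨-u, by linarith⟩

-- lifting the exponent, weak form
lemma aux_lift (a b : ℤ) (p : ℕ) (hp : p.Prime) {n : ℕ}
    (h : (p:ℤ) ∣ a ^ n - b ^ n) :
    ∀ j : ℕ, ((p:ℤ)) ^ (j+1) ∣ a ^ (n * p ^ j) - b ^ (n * p ^ j) := by
  haveI : Fact p.Prime := ⟨hp⟩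
  intro j
  induction j with
  | zero => simpa using h
  | succ j ih =>
    set M := n * p ^ j with hM
    have hfac : a ^ (n * p ^ (j+1)) - b ^ (n * p ^ (j+1)) =
        (∑ i ∈ range p, (a ^ M) ^ i * (b ^ M) ^ (p - 1 - i)) * (a ^ M - b ^ M) := by
      rw [geom_sum₂_mul]
      rw [show n * p ^ (j+1) = M * p by rw [hM]; ring, pow_mul a M p, pow_mul b M p]
    have hpM : (p:ℤ) ∣ a ^ M - b ^ M :=
      dvd_trans h (by rw [hM, pow_mul, pow_mul]; exact sub_dvd_pow_sub_pow _ _ _)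
    have hS : (p:ℤ) ∣ ∑ i ∈ range p, (a ^ M) ^ i * (b ^ M) ^ (p - 1 - i) := by
      have hab : ((a:ZMod p)) ^ M = ((b:ZMod p)) ^ M := by
        have : ((a ^ M - b ^ M : ℤ) : ZMod p) = 0 := by
          rw [ZMod.intCast_zmod_eq_zero_iff_dvd]; exact_mod_cast hpM
        push_cast at this
        linear_combination this
      rw [← ZMod.intCast_zmod_eq_zero_iff_dvd]
      push_cast
      have heq : ∀ i ∈ range p, (((a:ZMod p)) ^ M) ^ i * (((b:ZMod p)) ^ M) ^ (p-1-i)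
          = ((b:ZMod p) ^ M) ^ (p-1) := by
        intro i hi
        rw [hab, ← pow_add]
        congr 1
        have := Finset.mem_range.mp hi
        omega
      rw [Finset.sum_congr rfl heq, Finset.sum_const, Finset.card_range,
        nsmul_eq_mul, ZMod.natCast_self, zero_mul]
    calc ((p:ℤ)) ^ (j+1+1) = (p:ℤ) * (p:ℤ)^(j+1) := by ring
    _ ∣ (∑ i ∈ range p, (a ^ M) ^ i * (b ^ M) ^ (p - 1 - i)) * (a ^ M - b ^ M) :=
        mul_dvd_mul hS ih
    _ = _ := hfac.symm

lemma aux_val2 {t k : ℕ} (hk : 0 < k) (h2 : t ∣ 2 * k) (h1 : ¬ t ∣ k) :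
    2 ^ (padicValNat 2 k + 1) ∣ t ∧ ¬ 2 ^ (padicValNat 2 k + 2) ∣ t := by
  set v := padicValNat 2 k with hv
  have ht0 : t ≠ 0 := by rintro rfl; exact h1 (by simpa using h2)
  have hk0 : k ≠ 0 := hk.ne'
  constructor
  · by_contra hnd
    apply h1
    rw [← Nat.factorization_le_iff_dvd ht0 hk0]
    intro q
    rcases eq_or_ne q 2 with rfl | hq
    · have hle : t.factorization 2 ≤ v := by
        by_contra hlt
        exact hnd ((Nat.Prime.pow_dvd_iff_le_factorization Nat.prime_two ht0).mpr (by omega))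
      have : k.factorization 2 = v := by
        rw [hv, ← Nat.factorization_def k Nat.prime_two]
      omega
    · have := Nat.factorization_le_iff_dvd (by omega : (2:ℕ)*k ≠ 0) (by omega : (2:ℕ)*k ≠ 0)
      have h3 : t.factorization q ≤ (2 * k).factorization q :=
        (Nat.factorization_le_iff_dvd ht0 (by omega)).mpr h2 q
      have hz : (Nat.factorization 2) q = 0 := by
        rw [Nat.Prime.factorization Nat.prime_two]
        simp only [Finsupp.single_apply]
        rw [if_neg (by omega)]
      rw [Nat.factorization_mul (by norm_num) hk0, Finsupp.add_apply, hz, zero_add] at h3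
      exact h3
  · intro hnd
    have hd2 : 2 ^ (v + 2) ∣ 2 * k := hnd.trans h2
    have h4 : 2 ^ (v + 1) ∣ k :=
      (mul_dvd_mul_iff_left (by norm_num : (2:ℕ) ≠ 0)).mp (by rw [← pow_succ']; exact hd2)
    exact pow_succ_padicValNat_not_dvd hk0 h4

lemma aux_unit (a b : ℤ) (p : ℕ) [Fact p.Prime]
    (h : orderOf ((a : ZMod p) * (b : ZMod p)⁻¹) ≠ 0) :
    ¬ (p:ℤ) ∣ a ∧ ¬ (p:ℤ) ∣ b := by
  have hx : ((a : ZMod p) * (b : ZMod p)⁻¹) ≠ 0 := by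
    intro h0
    apply h
    rw [orderOf_eq_zero_iff]
    intro hfo
    obtain ⟨n, hn, hpow⟩ := isOfFinOrder_iff_pow_eq_one.mp hfo
    rw [h0, zero_pow hn.ne'] at hpow
    exact zero_ne_one hpow
  constructor
  · intro hd
    apply hx
    rw [show ((a:ℤ):ZMod p) = 0 from (ZMod.intCast_zmod_eq_zero_iff_dvd a p).mpr hd, zero_mul]
  · intro hd
    apply hx
    rw [show ((b:ℤ):ZMod p) = 0 from (ZMod.intCast_zmod_eq_zero_iff_dvd b p).mpr hd,
      inv_zero, mul_zero]

lemma aux_prime_pow (a b : ℤ) (p : ℕ) (hp : p.Prime) (hodd : p ≠ 2)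
    (hpa : ¬ (p:ℤ) ∣ a) (hpb : ¬ (p:ℤ) ∣ b) (s e : ℕ) (hs : 1 ≤ s)
    (h1 : 2 ^ s ∣ orderOf ((a : ZMod p) * (b : ZMod p)⁻¹))
    (h2 : ¬ 2 ^ (s+1) ∣ orderOf ((a : ZMod p) * (b : ZMod p)⁻¹)) :
    ∃ k : ℕ, 0 < k ∧ 2 ^ (s-1) ∣ k ∧ ¬ 2 ^ s ∣ k ∧ ((p:ℤ)) ^ e ∣ a ^ k + b ^ k := by
  haveI : Fact p.Prime := ⟨hp⟩
  set x := (a : ZMod p) * (b : ZMod p)⁻¹ with hx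
  set t := orderOf x with ht
  have ht0 : t ≠ 0 := by rintro h0; exact h2 (h0 ▸ dvd_zero _)
  have h2t : 2 ∣ t := dvd_trans (dvd_pow_self 2 (by omega : s ≠ 0)) h1
  obtain ⟨u, hu⟩ := h2t
  -- half the order
  have hu0 : u ≠ 0 := by rintro rfl; simp at hu; exact ht0 hu
  have hhalf1 : 2 ^ (s-1) ∣ u := by
    obtain ⟨w, hw⟩ := h1
    refine ⟨w, ?_⟩
    have h2s : (2:ℕ) ^ s = 2 * 2 ^ (s-1) := by
      obtain ⟨s', rfl⟩ : ∃ s', s = s' + 1 := ⟨s-1, by omega⟩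
      rw [Nat.add_sub_cancel, pow_succ, mul_comm]
    have : 2 * u = 2 * (2 ^ (s-1) * w) := by rw [← hu, hw, h2s]; ring
    omega
  have hhalf2 : ¬ 2 ^ s ∣ u := by
    intro hd
    apply h2
    rw [hu, pow_succ, mul_comm ((2:ℕ)^s) 2]
    exact mul_dvd_mul_left 2 hd
  set k := u * p ^ (e) with hk
  have hcop : Nat.Coprime (2 ^ s) (p ^ e) :=
    Nat.Coprime.pow _ _ ((Nat.coprime_primes Nat.prime_two hp).mpr (fun h => hodd h.symm))
  have hknot : ¬ 2 ^ s ∣ k := fun hd => hhalf2 (hcop.dvd_of_dvd_mul_right hd)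
  refine ⟨k, ?_, ?_, hknot, ?_⟩
  · exact Nat.mul_pos (Nat.pos_of_ne_zero hu0) (Nat.pow_pos hp.pos)
  · exact hhalf1.mul_right _
  · -- p^e ∣ a^k + b^k
    have hxt : x ^ t = 1 := pow_orderOf_eq_one x
    have hdt : (p:ℤ) ∣ a ^ t - b ^ t := (aux_pow_eq_one_iff a b p hpb t).mp hxt
    have hlift := aux_lift a b p hp hdt e
    have h2k : t * p ^ e = 2 * k := by rw [hk, hu]; ring
    have hfac : a ^ (t * p ^ e) - b ^ (t * p ^ e) = (a ^ k - b ^ k) * (a ^ k + b ^ k) := by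
      rw [h2k, mul_comm 2 k, pow_mul, pow_mul]; ring
    have hnd : ¬ (p:ℤ) ∣ a ^ k - b ^ k := by
      intro hd
      have hxk : x ^ k = 1 := (aux_pow_eq_one_iff a b p hpb k).mpr hd
      have htk : t ∣ k := orderOf_dvd_of_pow_eq_one hxk
      exact hknot (h1.trans htk)
    have hppr : Prime ((p:ℤ)) := Nat.prime_iff_prime_int.mp hp
    have hfin : ((p:ℤ)) ^ (e+1) ∣ a ^ k + b ^ k :=
      hppr.pow_dvd_of_dvd_mul_left (e+1) hnd (by rw [← hfac]; exact hlift)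
    exact (pow_dvd_pow _ (by omega : e ≤ e + 1)).trans hfin

lemma aux_combine (a b : ℤ) (s : ℕ) (hs : 1 ≤ s) :
    ∀ c : ℕ, 0 < c → Odd c →
    (∀ p : ℕ, p.Prime → p ∣ c →
      ¬ (p:ℤ) ∣ a ∧ ¬ (p:ℤ) ∣ b ∧
      2 ^ s ∣ orderOf ((a : ZMod p) * (b : ZMod p)⁻¹) ∧
      ¬ 2 ^ (s+1) ∣ orderOf ((a : ZMod p) * (b : ZMod p)⁻¹)) →
    ∃ k : ℕ, 0 < k ∧ 2 ^ (s-1) ∣ k ∧ ¬ 2 ^ s ∣ k ∧ ((c:ℤ)) ∣ a ^ k + b ^ k := by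
  intro c
  induction c using Nat.strong_induction_on with
  | _ c IH =>
    intro hc hcodd hall
    rcases eq_or_ne c 1 with rfl | hc1
    · refine ⟨2 ^ (s-1), Nat.pow_pos (by norm_num), dvd_refl _, ?_, one_dvd _⟩
      intro hd
      have h1 := Nat.le_of_dvd (Nat.pow_pos (by norm_num)) hd
      have h2 := Nat.pow_lt_pow_right (a := 2) (by norm_num) (show s - 1 < s by omega)
      omega
    · set p := c.minFac with hpdef
      have hp : p.Prime := Nat.minFac_prime hc1
      have hpc : p ∣ c := Nat.minFac_dvd c
      have h2c : ¬ (2:ℕ) ∣ c := by rw [Nat.odd_iff] at hcodd; omega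
      have hpodd : p ≠ 2 := by
        intro h2
        exact h2c (h2 ▸ hpc)
      set e := c.factorization p with he
      set m := c / p ^ e with hm
      have hcm : p ^ e * m = c := Nat.ordProj_mul_ordCompl_eq_self c p
      have hmpos : 0 < m := Nat.ordCompl_pos p hc.ne'
      have he1 : 1 ≤ e := (Nat.Prime.factorization_pos_of_dvd hp hc.ne' hpc)
      have hpe : 2 ≤ p ^ e := le_trans hp.two_le (Nat.le_self_pow (by omega) p)
      have hmlt : m < c := by nlinarith
      have hmdvd : m ∣ c := Nat.ordCompl_dvd c p
      have hmodd : Odd m := by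
        rw [Nat.odd_iff]
        have : ¬ (2:ℕ) ∣ m := fun h => h2c (h.trans hmdvd)
        omega
      have hpm : ¬ p ∣ m := Nat.not_dvd_ordCompl hp hc.ne'
      -- prime power part
      obtain ⟨hpa, hpb, h1, h2⟩ := hall p hp hpc
      obtain ⟨k₁, hk₁pos, hk₁d, hk₁nd, hk₁dvd⟩ :=
        aux_prime_pow a b p hp hpodd hpa hpb s e hs h1 h2
      -- rest by induction
      obtain ⟨k₂, hk₂pos, hk₂d, hk₂nd, hk₂dvd⟩ :=
        IH m hmlt hmpos hmodd (fun q hq hqm => hall q hq (hqm.trans hmdvd))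
      set K := Nat.lcm k₁ k₂ with hK
      have hKpos : 0 < K := Nat.pos_of_ne_zero (Nat.lcm_ne_zero hk₁pos.ne' hk₂pos.ne')
      have hKd : 2 ^ (s-1) ∣ K := hk₁d.trans (Nat.dvd_lcm_left _ _)
      have hoddquot : ∀ k₀ : ℕ, 0 < k₀ → 2 ^ (s-1) ∣ k₀ → ¬ 2 ^ s ∣ K → k₀ ∣ K →
          Odd (K / k₀) := by
        intro k₀ hpos hdv hnd hdK
        rcases Nat.even_or_odd (K / k₀) with hev | hod
        swap
        · exact hod
        exfalso
        apply hnd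
        obtain ⟨q, hq⟩ := hdK
        obtain ⟨r, hrr⟩ := (even_iff_two_dvd.mp hev)
        rw [hq, Nat.mul_div_cancel_left _ hpos] at hrr
        have : K = (2 ^ (s-1) * 2) * ((k₀ / 2 ^ (s-1)) * r) := by
          obtain ⟨w, hw⟩ := hdv
          rw [hq, hrr, hw, Nat.mul_div_cancel_left _ (Nat.pow_pos (by norm_num))]
          ring
        rw [this, ← pow_succ, show s - 1 + 1 = s by omega]
        exact Dvd.intro _ rfl
      have hKnd : ¬ 2 ^ s ∣ K := by
        intro hd
        have hf := Nat.factorization_lcm hk₁pos.ne' hk₂pos.ne'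
        have hle : s ≤ K.factorization 2 :=
          (Nat.Prime.pow_dvd_iff_le_factorization Nat.prime_two hKpos.ne').mp hd
        have h₁ : k₁.factorization 2 ≤ s - 1 := by
          by_contra hlt
          exact hk₁nd ((Nat.Prime.pow_dvd_iff_le_factorization Nat.prime_two
            hk₁pos.ne').mpr (by omega))
        have h₂ : k₂.factorization 2 ≤ s - 1 := by
          by_contra hlt
          exact hk₂nd ((Nat.Prime.pow_dvd_iff_le_factorization Nat.prime_two
            hk₂pos.ne').mpr (by omega))
        rw [hf] at hle
        have hsup : (k₁.factorization ⊔ k₂.factorization) 2 = k₁.factorization 2 ⊔ k₂.factorization 2 :=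
          Finsupp.sup_apply _ _ _
        rw [hsup] at hle
        have : k₁.factorization 2 ⊔ k₂.factorization 2 ≤ s - 1 := sup_le h₁ h₂
        omega
      have hdvdK : ∀ k₀ : ℕ, 0 < k₀ → 2 ^ (s-1) ∣ k₀ → k₀ ∣ K →
          a ^ k₀ + b ^ k₀ ∣ a ^ K + b ^ K := by
        intro k₀ hpos hdv hdK
        have hq : K = k₀ * (K / k₀) := (Nat.mul_div_cancel' hdK).symm
        have hodd' : Odd (K / k₀) := hoddquot k₀ hpos hdv hKnd hdK
        calc a ^ k₀ + b ^ k₀ ∣ (a ^ k₀) ^ (K / k₀) + (b ^ k₀) ^ (K / k₀) :=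
              Odd.add_dvd_pow_add_pow _ _ hodd'
        _ = a ^ K + b ^ K := by rw [← pow_mul, ← pow_mul, ← hq]
      have hp1 : ((p:ℤ)) ^ e ∣ a ^ K + b ^ K :=
        hk₁dvd.trans (hdvdK k₁ hk₁pos hk₁d (Nat.dvd_lcm_left _ _))
      have hp2 : ((m:ℤ)) ∣ a ^ K + b ^ K :=
        hk₂dvd.trans (hdvdK k₂ hk₂pos hk₂d (Nat.dvd_lcm_right _ _))
      have hcop : IsCoprime ((p:ℤ) ^ e) ((m:ℤ)) := by
        have : Nat.Coprime (p ^ e) m := Nat.Coprime.pow_left _ (hp.coprime_iff_not_dvd.mpr hpm)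
        exact_mod_cast Nat.isCoprime_iff_coprime.mpr this
      refine ⟨K, hKpos, hKd, hKnd, ?_⟩
      have := hcop.mul_dvd hp1 hp2
      rw [← hcm]
      push_cast
      exact this

/-- Let `a` and `b` be coprime odd integers with `a + b ≠ 0`. A positive integer `c`
is `2`-good if and only if either `c = 2d` with `d` being `4`-good, or `c` is odd and
either `c = 1` or there exists `s ≥ 1` such that for every prime `p ∣ c`, the order of
`a·b⁻¹` modulo `p` is exactly divisible by `2^s`. -/
theorem two_good_iff
    (a b : ℤ) (ha : Odd a) (hb : Odd b) (hco : IsCoprime a b) (hab : a + b ≠ 0)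
    (c : ℕ) (hc : 0 < c) :
    (∃ k : ℕ, 0 < k ∧ ((2 * c : ℕ) : ℤ) ∣ a ^ k + b ^ k) ↔
      ((∃ d : ℕ, 0 < d ∧ c = 2 * d ∧
          ∃ k : ℕ, 0 < k ∧ ((4 * d : ℕ) : ℤ) ∣ a ^ k + b ^ k) ∨
        (Odd c ∧ (c = 1 ∨
          ∃ s : ℕ, 1 ≤ s ∧ ∀ p : ℕ, p.Prime → p ∣ c →
            2 ^ s ∣ orderOf ((a : ZMod p) * (b : ZMod p)⁻¹) ∧
              ¬ 2 ^ (s + 1) ∣ orderOf ((a : ZMod p) * (b : ZMod p)⁻¹)))) := by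
  constructor
  · rintro ⟨k, hk, hdvd⟩
    rcases Nat.even_or_odd c with hev | hodd
    · obtain ⟨d, rfl⟩ := hev
      left
      refine ⟨d, by omega, by omega, k, hk, ?_⟩
      rw [show (4 * d : ℕ) = 2 * (d + d) by omega]
      exact hdvd
    · right
      refine ⟨hodd, ?_⟩
      rcases eq_or_ne c 1 with rfl | hc1
      · exact Or.inl rfl
      right
      refine ⟨padicValNat 2 k + 1, by omega, ?_⟩
      intro p hp hpc
      haveI : Fact p.Prime := ⟨hp⟩
      have hpodd : p ≠ 2 := by
        rintro rfl
        rw [Nat.odd_iff] at hodd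
        omega
      have hcd : (c:ℤ) ∣ a ^ k + b ^ k := by
        refine dvd_trans ?_ hdvd
        exact_mod_cast Nat.cast_dvd_cast (dvd_mul_left c 2)
      have hpk : (p:ℤ) ∣ a ^ k + b ^ k := (Int.natCast_dvd_natCast.mpr hpc).trans hcd
      have hppr : Prime ((p:ℤ)) := Nat.prime_iff_prime_int.mp hp
      have hcontra : ∀ d : ℤ, d ∣ a → d ∣ b → ¬ Prime d := by
        intro d hda hdb hpr
        have := hco.isUnit_of_dvd' hda hdb
        exact hpr.not_unit this
      have hpa : ¬ (p:ℤ) ∣ a := by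
        intro hda
        have hdak : (p:ℤ) ∣ a ^ k := dvd_pow hda (by omega)
        have hdbk : (p:ℤ) ∣ b ^ k := (dvd_add_right hdak).mp hpk
        exact hcontra _ hda (hppr.dvd_of_dvd_pow hdbk) hppr
      have hpb : ¬ (p:ℤ) ∣ b := by
        intro hdb
        have hdbk : (p:ℤ) ∣ b ^ k := dvd_pow hdb (by omega)
        have hdak : (p:ℤ) ∣ a ^ k := (dvd_add_left hdbk).mp hpk
        exact hcontra _ (hppr.dvd_of_dvd_pow hdak) hdb hppr
      have hxk : ((a : ZMod p) * (b : ZMod p)⁻¹) ^ k = -1 :=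
        (aux_pow_eq_negone_iff a b p hpb k).mpr hpk
      have ht2k : orderOf ((a : ZMod p) * (b : ZMod p)⁻¹) ∣ 2 * k := by
        apply orderOf_dvd_of_pow_eq_one
        rw [mul_comm 2 k, pow_mul, hxk, neg_one_sq]
      have htk : ¬ orderOf ((a : ZMod p) * (b : ZMod p)⁻¹) ∣ k := by
        intro hd
        have h1 : ((a : ZMod p) * (b : ZMod p)⁻¹) ^ k = 1 :=
          orderOf_dvd_iff_pow_eq_one.mp hd
        rw [hxk] at h1
        have h2 : ((2:ℕ) : ZMod p) = 0 := by push_cast; linear_combination - h1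
        rw [ZMod.natCast_eq_zero_iff] at h2
        have := Nat.le_of_dvd (by norm_num) h2
        have := hp.two_le
        omega
      exact aux_val2 hk ht2k htk
  · rintro (⟨d, hd, rfl, k, hk, hdvd⟩ | ⟨hodd, hrest⟩)
    · refine ⟨k, hk, ?_⟩
      rw [show 2 * (2 * d) = 4 * d by ring]
      exact hdvd
    · rcases hrest with rfl | ⟨s, hs, hall⟩
      · refine ⟨1, one_pos, ?_⟩
        have h2 : (2:ℤ) ∣ a + b := (ha.add_odd hb).two_dvd
        simpa using h2
      · have hall' : ∀ p : ℕ, p.Prime → p ∣ c →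
            ¬ (p:ℤ) ∣ a ∧ ¬ (p:ℤ) ∣ b ∧
            2 ^ s ∣ orderOf ((a : ZMod p) * (b : ZMod p)⁻¹) ∧
            ¬ 2 ^ (s+1) ∣ orderOf ((a : ZMod p) * (b : ZMod p)⁻¹) := by
          intro p hp hpc
          haveI : Fact p.Prime := ⟨hp⟩
          obtain ⟨h1, h2⟩ := hall p hp hpc
          have hne : orderOf ((a : ZMod p) * (b : ZMod p)⁻¹) ≠ 0 :=
            fun h0 => h2 (h0 ▸ dvd_zero _)
          obtain ⟨hpa, hpb⟩ := aux_unit a b p hne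
          exact ⟨hpa, hpb, h1, h2⟩
        obtain ⟨k, hkpos, _, _, hkdvd⟩ := aux_combine a b s hs c hc hodd hall'
        refine ⟨k, hkpos, ?_⟩
        have h2 : (2:ℤ) ∣ a ^ k + b ^ k := ((ha.pow).add_odd (hb.pow)).two_dvd
        have hcop : IsCoprime (2:ℤ) ((c:ℕ):ℤ) := by
          have hnc : Nat.Coprime 2 c :=
            (Nat.Prime.coprime_iff_not_dvd Nat.prime_two).mpr
              (by rw [Nat.odd_iff] at hodd; omega)
          exact_mod_cast Nat.isCoprime_iff_coprime.mpr hnc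
        have := hcop.mul_dvd h2 hkdvd
        push_cast
        exact this
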